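/- Let C be a finite candidate set with p ∈ C, let X and Y be finite multisets of 2-Approval votes on C, and let k, ℓ ∈ ℕ with k ≤ |X| and ℓ ≤ |Y|. If there exist submultisets X′ of X and Y′ of Y with |X′| = k and |Y′| = ℓ such that p is a 2-Approval winner of X′ + Y′, then there exist such submultisets X′ and Y′ that additionally satisfy #{votes in X′ containing p} = min(k, #{votes in X containing p}) and #{votes in Y′ containing p} = min(ℓ, #{votes in Y containing p}). -/
import Mathlib


/-- The 2-Approval score of candidate `c`: the number of votes containing `c`. -/
def apScore {C : Type} [DecidableEq C] (V : Multiset (Sym2 C)) (c : C) : ℕ :=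
  Multiset.card (V.filter (fun v => c ∈ v))

/-- `c` is a 2-Approval winner of `V` if its score is at least that of every candidate. -/
def apWinner {C : Type} [Fintype C] [DecidableEq C] (V : Multiset (Sym2 C)) (c : C) : Prop :=
  ∀ d : C, apScore V d ≤ apScore V c

lemma apScore_add {C : Type} [DecidableEq C] (A B : Multiset (Sym2 C)) (c : C) :
    apScore (A + B) c = apScore A c + apScore B c := by
  simp [apScore, Multiset.filter_add]

lemma apScore_mono {C : Type} [DecidableEq C] {A B : Multiset (Sym2 C)} (h : A ≤ B) (c : C) :
    apScore A c ≤ apScore B c :=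
  Multiset.card_le_card (Multiset.filter_le_filter _ h)

lemma apScore_le_card {C : Type} [DecidableEq C] (A : Multiset (Sym2 C)) (c : C) :
    apScore A c ≤ Multiset.card A :=
  Multiset.card_le_card (Multiset.filter_le _ _)

lemma apScore_cons {C : Type} [DecidableEq C] (w : Sym2 C) (A : Multiset (Sym2 C)) (c : C) :
    apScore (w ::ₘ A) c = apScore A c + (if c ∈ w then 1 else 0) := by
  simp only [apScore, Multiset.filter_cons]
  split <;> simp [add_comm]

lemma improve {C : Type} [Fintype C] [DecidableEq C] (p : C) (X Z : Multiset (Sym2 C)) (k : ℕ) :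
    ∀ n (X' : Multiset (Sym2 C)), min k (apScore X p) ≤ apScore X' p + n →
      X' ≤ X → Multiset.card X' = k → apWinner (X' + Z) p →
      ∃ X'' ≤ X, Multiset.card X'' = k ∧ apWinner (X'' + Z) p ∧
        apScore X'' p = min k (apScore X p) := by
  intro n
  induction n with
  | zero =>
      intro X' hmin hle hcard hw
      refine ⟨X', hle, hcard, hw, le_antisymm ?_ (by simpa using hmin)⟩
      exact le_min (hcard ▸ apScore_le_card X' p) (apScore_mono hle p)
  | succ n ih =>
      intro X' hmin hle hcard hw
      by_cases hge : min k (apScore X p) ≤ apScore X' p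
      · refine ⟨X', hle, hcard, hw, le_antisymm ?_ hge⟩
        exact le_min (hcard ▸ apScore_le_card X' p) (apScore_mono hle p)
      push_neg at hge
      obtain ⟨hk1, hk2⟩ := lt_min_iff.mp hge
      -- find v ∈ X' with p ∉ v
      have hvne : 0 < Multiset.card (X'.filter (fun v => ¬ p ∈ v)) := by
        have h1 : Multiset.card (X'.filter (fun v => p ∈ v)) +
            Multiset.card (X'.filter (fun v => ¬ p ∈ v)) = Multiset.card X' := by
          rw [← Multiset.card_add, Multiset.filter_add_not]
        have : apScore X' p < Multiset.card X' := hcard ▸ hk1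
        unfold apScore at this
        omega
      obtain ⟨v, hv⟩ := Multiset.card_pos_iff_exists_mem.mp hvne
      have hvX' : v ∈ X' := (Multiset.mem_filter.mp hv).1
      have hpv : ¬ p ∈ v := by simpa using (Multiset.mem_filter.mp hv).2
      -- find w ∈ X - X' (counting) with p ∈ w
      have hfle : X'.filter (fun v => p ∈ v) ≤ X.filter (fun v => p ∈ v) :=
        Multiset.filter_le_filter _ hle
      have hdiff : 0 < Multiset.card (X.filter (fun v => p ∈ v) - X'.filter (fun v => p ∈ v)) := by
        rw [Multiset.card_sub hfle]
        have := hk2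
        unfold apScore at this
        omega
      obtain ⟨w, hw'⟩ := Multiset.card_pos_iff_exists_mem.mp hdiff
      have hwX : w ∈ X.filter (fun v => p ∈ v) :=
        Multiset.mem_of_le (tsub_le_self) hw'
      have hpw : p ∈ w := (Multiset.mem_filter.mp hwX).2
      have hcnt : Multiset.count w X' < Multiset.count w X := by
        have h1 : 1 ≤ Multiset.count w (X.filter (fun v => p ∈ v) - X'.filter (fun v => p ∈ v)) :=
          Multiset.one_le_count_iff_mem.mpr hw'
        rw [Multiset.count_sub] at h1
        have h2 : Multiset.count w (X'.filter (fun v => p ∈ v)) = Multiset.count w X' := by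
          simp [Multiset.count_filter, hpw]
        have h3 : Multiset.count w (X.filter (fun v => p ∈ v)) = Multiset.count w X := by
          simp [Multiset.count_filter, hpw]
        omega
      have hwv : w ≠ v := fun h => hpv (h ▸ hpw)
      set X'' : Multiset (Sym2 C) := w ::ₘ X'.erase v with hX''
      have hle'' : X'' ≤ X := by
        rw [Multiset.le_iff_count]
        intro a
        have hXa := (Multiset.le_iff_count.mp hle) a
        rw [hX'', Multiset.count_cons]
        by_cases haw : a = w
        · subst haw
          rw [Multiset.count_erase_of_ne hwv, if_pos rfl]
          omega
        · rw [if_neg haw]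
          by_cases hav : a = v
          · subst hav
            rw [Multiset.count_erase_self]
            omega
          · rw [Multiset.count_erase_of_ne hav]
            omega
      have hcard'' : Multiset.card X'' = k := by
        rw [hX'', Multiset.card_cons, Multiset.card_erase_of_mem hvX', hcard,
          Nat.pred_eq_sub_one]
        omega
      have hX'eq : X' = v ::ₘ X'.erase v := (Multiset.cons_erase hvX').symm
      have hscore_p : apScore X'' p = apScore X' p + 1 := by
        rw [hX'', apScore_cons, if_pos hpw]
        have : apScore X' p = apScore (X'.erase v) p := by
          conv_lhs => rw [hX'eq]
          rw [apScore_cons, if_neg hpv]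
          exact Nat.add_zero _
        omega
      have hscore_le : ∀ c, apScore X'' c ≤ apScore X' c + 1 := by
        intro c
        rw [hX'', apScore_cons]
        have h1 : apScore (X'.erase v) c ≤ apScore X' c :=
          apScore_mono (Multiset.erase_le _ _) c
        split <;> omega
      have hw'' : apWinner (X'' + Z) p := by
        intro d
        rw [apScore_add, apScore_add, hscore_p]
        have := hw d
        rw [apScore_add, apScore_add] at this
        have := hscore_le d
        omega
      exact ih X'' (by omega) hle'' hcard'' hw''

theorem stmt14 {C : Type} [Fintype C] [DecidableEq C] (p : C)
    (X Y : Multiset (Sym2 C))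
    (hX : ∀ v ∈ X, ¬ v.IsDiag) (hY : ∀ v ∈ Y, ¬ v.IsDiag)
    (k ℓ : ℕ) (hk : k ≤ Multiset.card X) (hℓ : ℓ ≤ Multiset.card Y) :
    (∃ X' ≤ X, ∃ Y' ≤ Y, Multiset.card X' = k ∧ Multiset.card Y' = ℓ ∧
        apWinner (X' + Y') p) →
    (∃ X' ≤ X, ∃ Y' ≤ Y, Multiset.card X' = k ∧ Multiset.card Y' = ℓ ∧
        apWinner (X' + Y') p ∧
        apScore X' p = min k (apScore X p) ∧ apScore Y' p = min ℓ (apScore Y p)) := by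
  rintro ⟨X', hX'le, Y', hY'le, hXc, hYc, hwin⟩
  obtain ⟨X'', hX''le, hX''c, hwin2, hX''s⟩ :=
    improve p X Y' k (min k (apScore X p)) X' (Nat.le_add_left _ _) hX'le hXc hwin
  have hwin2' : apWinner (Y' + X'') p := by rwa [add_comm]
  obtain ⟨Y'', hY''le, hY''c, hwin3, hY''s⟩ :=
    improve p Y X'' ℓ (min ℓ (apScore Y p)) Y' (Nat.le_add_left _ _) hY'le hYc hwin2'
  exact ⟨X'', hX''le, Y'', hY''le, hX''c, hY''c, by rwa [add_comm], hX''s, hY''s⟩
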